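/- arXiv:2309.01857 — 2 statements merged into one kernel-verified Lean document; each statement's English description precedes it below -/
import Mathlib

section
/- Let 2 ≤ r ≤ k and let F be a graph. For all sufficiently large n (depending on F, r and k): if the r-graph H_r'(n,k) contains a copy of F^{(r)+}, then either F has chromatic number at most k, or F has a color-critical edge. -/
open Finset
open scoped Classical

/-- An `r`-uniform hypergraph on vertex type `V`: a finite set of `r`-element
vertex subsets, the hyperedges. -/
structure HyperGraph (V : Type*) (r : ℕ) where
  edges : Finset (Finset V)
  uniform : ∀ e ∈ edges, e.card = r

namespace HyperGraph

variable {V α : Type*}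

/-- A witness that the `r`-graph `G` contains a copy of the `r`-uniform expansion
`F^{(r)+}` of the graph `F`, with core embedding `φ` and, for each edge of `F`, a set
of `r - 2` expansion vertices given by `S`.  The expansion vertices avoid the core and
are pairwise disjoint over distinct edges. -/
def IsExpansionWitness [DecidableEq V] {r : ℕ} (G : HyperGraph V r) (F : SimpleGraph α)
    (φ : α ↪ V) (S : Sym2 α → Finset V) : Prop :=
  (∀ a b, F.Adj a b → (S s(a, b)).card = r - 2) ∧
  (∀ a b, F.Adj a b → ∀ x ∈ S s(a, b), x ∉ Set.range φ) ∧
  (∀ e ∈ F.edgeSet, ∀ e' ∈ F.edgeSet, e ≠ e' → Disjoint (S e) (S e')) ∧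
  (∀ a b, F.Adj a b → insert (φ a) (insert (φ b) (S s(a, b))) ∈ G.edges)

/-- The `r`-graph `G` contains a copy of the expansion `F^{(r)+}` (i.e. a subhypergraph
isomorphic to it). -/
def ContainsExpansion [DecidableEq V] {r : ℕ} (G : HyperGraph V r) (F : SimpleGraph α) : Prop :=
  ∃ φ S, G.IsExpansionWitness F φ S

end HyperGraph

/-- `ex_r(n, F^{(r)+})`: the maximum number of hyperedges in an `n`-vertex
`F^{(r)+}`-free `r`-graph. -/
noncomputable def exExpansion (r n : ℕ) {α : Type*} (F : SimpleGraph α) : ℕ :=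
  sSup {m | ∃ G : HyperGraph (Fin n) r, ¬ G.ContainsExpansion F ∧ G.edges.card = m}

/-- `F` is contained in `G` as a (not necessarily induced) subgraph. -/
def GraphContains {α β : Type*} (F : SimpleGraph α) (G : SimpleGraph β) : Prop :=
  ∃ f : α ↪ β, ∀ a b, F.Adj a b → G.Adj (f a) (f b)

/-- The number of copies of `K_r` (i.e. `r`-cliques) in the graph `G`. -/
noncomputable def cliqueCount {V : Type*} [Fintype V] (G : SimpleGraph V) (r : ℕ) : ℕ :=
  Nat.card {s : Finset V // G.IsNClique r s}

/-- The generalized Turán number `ex(n, K_r, F)`: the maximum number of `r`-cliques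
in an `n`-vertex `F`-free graph. -/
noncomputable def exClique (n r : ℕ) {α : Type*} (F : SimpleGraph α) : ℕ :=
  sSup {m | ∃ G : SimpleGraph (Fin n), ¬ GraphContains F G ∧ cliqueCount G r = m}

/-- The number of copies of the complete `p`-uniform hypergraph `K_r^p` in a `p`-graph `G`:
the number of `r`-element vertex sets all of whose `p`-subsets are hyperedges. -/
noncomputable def hyperCliqueCount {V : Type*} [Fintype V] {p : ℕ} (G : HyperGraph V p)
    (r : ℕ) : ℕ :=
  Nat.card {R : Finset V // R.card = r ∧ ∀ e ⊆ R, e.card = p → e ∈ G.edges}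

/-- `ex_p(n, K_r^p, F^{(p)+})`: the maximum number of copies of `K_r^p` in an `n`-vertex
`F^{(p)+}`-free `p`-graph. -/
noncomputable def exHyperClique (p r n : ℕ) {α : Type*} (F : SimpleGraph α) : ℕ :=
  sSup {m | ∃ G : HyperGraph (Fin n) p, ¬ G.ContainsExpansion F ∧ hyperCliqueCount G r = m}

/-- `G` contains (a subgraph isomorphic to) a member of the decomposition family `D(F)`:
a bipartite graph obtained from a proper `(k+1)`-coloring of `F` by deleting `k - 1`
color classes. -/
def ContainsDecompMember {α β : Type*} (F : SimpleGraph α) (k : ℕ) (G : SimpleGraph β) : Prop :=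
  ∃ c : α → Fin (k + 1), (∀ a b, F.Adj a b → c a ≠ c b) ∧
    ∃ i j : Fin (k + 1), i ≠ j ∧ GraphContains (F.induce {a | c a = i ∨ c a = j}) G

/-- `biex(n, F)`: the maximum number of edges of an `n`-vertex graph containing no member
of the decomposition family `D(F)` (for a graph `F` of chromatic number `k+1`). -/
noncomputable def biex (n : ℕ) {α : Type*} (F : SimpleGraph α) (k : ℕ) : ℕ :=
  sSup {m | ∃ G : SimpleGraph (Fin n), ¬ ContainsDecompMember F k G ∧ Nat.card G.edgeSet = m}

/-- `t_r(n,k)`: the number of hyperedges of the complete balanced `k`-partite `r`-graph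
`T_r(n,k)` (realized on `Fin n` with the balanced partition `v ↦ v % k`). -/
noncomputable def turanHyperCount (r n k : ℕ) : ℕ :=
  Nat.card {e : Finset (Fin n) // e.card = r ∧
    Set.InjOn (fun v : Fin n => v.val % k) ↑e}

/-- `|E(T_r(n,k,i))|`: the number of hyperedges of the `r`-graph obtained from `T_r(n-i,k)`
by adding `i` new vertices (here the vertices with value `< i`) and all `r`-sets containing
at least one of them. -/
noncomputable def turanPlusCount (r n k i : ℕ) : ℕ :=
  Nat.card {e : Finset (Fin n) // e.card = r ∧
    ((∃ v ∈ e, v.val < i) ∨ Set.InjOn (fun v : Fin n => (v.val - i) % k) ↑e)}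

/-- `G` has a color-critical edge: an edge whose deletion decreases the chromatic number. -/
def HasColorCriticalEdge {β : Type*} (G : SimpleGraph β) : Prop :=
  ∃ a b, G.Adj a b ∧ (G.deleteEdges {s(a, b)}).chromaticNumber < G.chromaticNumber

/-- `B_{k+1,1}`: two copies of `K_{k+1}` sharing exactly one vertex (the vertex `k`). -/
def bowtie (k : ℕ) : SimpleGraph (Fin (2 * k + 1)) :=
  SimpleGraph.fromRel (fun a b => (a.val ≤ k ∧ b.val ≤ k) ∨ (k ≤ a.val ∧ k ≤ b.val))

/-- The `r`-graph `H'(m)` on `n` vertices: a complete `k`-partite `r`-graph with one part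
`V_1` of size `m` (the vertices with value `< m`) and `k-1` balanced parts on the remaining
vertices, together with all `r`-sets containing both `u` (the vertex `0`) and `v` (the
vertex `1`), and all `r`-sets containing `u` and `r-1` vertices outside `V_1`. -/
noncomputable def HprimeGraph (r n k m : ℕ) : HyperGraph (Fin n) r :=
  ⟨Finset.univ.filter (fun e : Finset (Fin n) => e.card = r ∧
      (Set.InjOn (fun v : Fin n => if v.val < m then 0 else (v.val - m) % (k - 1) + 1) ↑e
        ∨ ((∃ a ∈ e, a.val = 0) ∧ (∃ b ∈ e, b.val = 1))
        ∨ ((∃ a ∈ e, a.val = 0) ∧ ∀ w ∈ e, w.val ≠ 0 → m ≤ w.val))),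
    fun e he => ((Finset.mem_filter.mp he).2).1⟩

/-- `Δ*(t)G`: the `(r-1)`-graph of `t`-heavy `(r-1)`-sets, i.e. the `(r-1)`-element
vertex sets contained in at least `t` hyperedges of `G`. -/
noncomputable def shadowOp {V : Type*} [Fintype V] [DecidableEq V] {r : ℕ} (t : ℕ)
    (G : HyperGraph V r) : HyperGraph V (r - 1) :=
  ⟨Finset.univ.filter (fun A : Finset V =>
      A.card = r - 1 ∧ t ≤ (G.edges.filter (fun e => A ⊆ e)).card),
    fun A hA => ((Finset.mem_filter.mp hA).2).1⟩

/-- Iterated shadow operator: `iterShadow t G j = (Δ*(t))^j G`, a `(r-j)`-graph. -/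
noncomputable def iterShadow {V : Type*} [Fintype V] [DecidableEq V] (t : ℕ) {r : ℕ}
    (G : HyperGraph V r) : (j : ℕ) → HyperGraph V (r - j)
  | 0 => G
  | j + 1 => shadowOp t (iterShadow t G j)

/-- A vertex set `A` is `t`-fat with respect to `G`: there are at least `t` hyperedges
of `G` whose pairwise intersections all equal `A`. -/
def TFat {V : Type*} [DecidableEq V] {r : ℕ} (t : ℕ) (G : HyperGraph V r)
    (A : Finset V) : Prop :=
  ∃ E : Finset (Finset V), E ⊆ G.edges ∧ t ≤ E.card ∧
    ∀ e ∈ E, ∀ e' ∈ E, e ≠ e' → e ∩ e' = A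

/-- The graph `G(𝒢)` of `t`-fat pairs of the `r`-graph `G`. -/
def fatGraph {V : Type*} [DecidableEq V] {r : ℕ} (t : ℕ) (G : HyperGraph V r) :
    SimpleGraph V :=
  SimpleGraph.fromRel (fun x y => TFat t G {x, y})

/-- The `i`-graph whose hyperedges are the `t`-fat `i`-element vertex sets of `G`. -/
noncomputable def fatHyper {V : Type*} [Fintype V] [DecidableEq V] {r : ℕ} (t i : ℕ)
    (G : HyperGraph V r) : HyperGraph V i :=
  ⟨Finset.univ.filter (fun A : Finset V => A.card = i ∧ TFat t G A),
    fun A hA => ((Finset.mem_filter.mp hA).2).1⟩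

/-- The `r`-graph whose hyperedges are the vertex sets of the `r`-cliques of `G`. -/
noncomputable def cliqueHyper {V : Type*} [Fintype V] (G : SimpleGraph V) (r : ℕ) :
    HyperGraph V r :=
  ⟨Finset.univ.filter (fun e : Finset V => G.IsNClique r e),
    fun e he => ((Finset.mem_filter.mp he).2).card_eq⟩

/-- The `r`-graph on `n` vertices whose hyperedges are all `r`-sets containing the
fixed vertex `0`. -/
noncomputable def starHyper (n r : ℕ) : HyperGraph (Fin n) r :=
  ⟨Finset.univ.filter (fun e : Finset (Fin n) => e.card = r ∧ ∃ a ∈ e, a.val = 0),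
    fun e he => ((Finset.mem_filter.mp he).2).1⟩

/-- `σ(F)`: the minimum size of a color class over all proper `(k+1)`-colorings of `F`. -/
noncomputable def sigmaF {α : Type*} (F : SimpleGraph α) (k : ℕ) : ℕ :=
  sInf {m | ∃ c : α → Fin (k + 1), (∀ a b, F.Adj a b → c a ≠ c b) ∧
    ∃ i, m = Nat.card {a // c a = i}}

/-- The number of neighbors of `v` (in the graph `G`) lying in the part `i` of the
partition `P`. -/
noncomputable def nbrCount {n k : ℕ} (G : SimpleGraph (Fin n)) (P : Fin n → Fin k)
    (v : Fin n) (i : Fin k) : ℕ :=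
  (Finset.univ.filter (fun w => G.Adj v w ∧ P w = i)).card

/-- The size of the part `i` of the partition `P`. -/
noncomputable def partSize {n k : ℕ} (P : Fin n → Fin k) (i : Fin k) : ℕ :=
  (Finset.univ.filter (fun v => P v = i)).card

/-- Every copy (in the graph `G`) of a member of the decomposition family `D(F)` that lies
inside a single part of the partition `P` has at least two vertices in `B`. -/
def DecompInB {α : Type*} {n k : ℕ} (F : SimpleGraph α) (G : SimpleGraph (Fin n))
    (P : Fin n → Fin k) (B : Finset (Fin n)) : Prop :=
  ∀ c : α → Fin (k + 1), (∀ a b, F.Adj a b → c a ≠ c b) →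
    ∀ i j : Fin (k + 1), i ≠ j →
      ∀ ψ : {a : α // c a = i ∨ c a = j} ↪ Fin n,
        (∀ a b : {a : α // c a = i ∨ c a = j}, F.Adj a.1 b.1 → G.Adj (ψ a) (ψ b)) →
        (∀ a b : {a : α // c a = i ∨ c a = j}, P (ψ a) = P (ψ b)) →
        ∃ a b : {a : α // c a = i ∨ c a = j}, a ≠ b ∧ ψ a ∈ B ∧ ψ b ∈ B

/-- Let `2 ≤ r ≤ k`. For all sufficiently large `n`: if a hypergraph
`H'(m)` with the maximum number of hyperedges (i.e. `H_r'(n,k)`) contains a copy of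
`F^{(r)+}`, then `χ(F) ≤ k` or `F` has a color-critical edge. -/
theorem statement_10 {α : Type*} [Fintype α] (F : SimpleGraph α) (k r : ℕ)
    (hr : 2 ≤ r) (hrk : r ≤ k) :
    ∃ n₀ : ℕ, ∀ n ≥ n₀, ∀ m, 2 ≤ m → m ≤ n →
      (∀ m', 2 ≤ m' → m' ≤ n →
        (HprimeGraph r n k m').edges.card ≤ (HprimeGraph r n k m).edges.card) →
      (HprimeGraph r n k m).ContainsExpansion F →
      F.chromaticNumber ≤ (k : ℕ∞) ∨ HasColorCriticalEdge F := by
    classical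
  have hk1 : 0 < k - 1 := by omega
  refine ⟨0, fun n _ m hm2 hmn _ hcont => ?_⟩
  obtain ⟨φ, S, h1, h2, h3, h4⟩ := hcont
  have hpk : ∀ v : Fin n, (if v.val < m then 0 else (v.val - m) % (k - 1) + 1) < k := by
    intro v
    split
    · omega
    · have := Nat.mod_lt (v.val - m) hk1; omega
  set c : α → Fin k := fun a =>
    ⟨if (φ a).val < m then 0 else ((φ a).val - m) % (k - 1) + 1, hpk (φ a)⟩ with hc
  have hE : ∀ a b, F.Adj a b →
      (Set.InjOn (fun v : Fin n => if v.val < m then 0 else (v.val - m) % (k - 1) + 1)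
          ↑(insert (φ a) (insert (φ b) (S s(a, b))))
        ∨ ((∃ x ∈ insert (φ a) (insert (φ b) (S s(a, b))), x.val = 0) ∧
            ∃ y ∈ insert (φ a) (insert (φ b) (S s(a, b))), y.val = 1)
        ∨ ((∃ x ∈ insert (φ a) (insert (φ b) (S s(a, b))), x.val = 0) ∧
            ∀ w ∈ insert (φ a) (insert (φ b) (S s(a, b))), w.val ≠ 0 → m ≤ w.val)) := by
    intro a b hab
    have h := h4 a b hab
    simp only [HprimeGraph, Finset.mem_filter, Finset.mem_univ, true_and] at h
    exact h.2
  have hBad : ∀ a b, F.Adj a b → c a = c b →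
      ((∃ x ∈ insert (φ a) (insert (φ b) (S s(a, b))), x.val = 0) ∧
          ∃ y ∈ insert (φ a) (insert (φ b) (S s(a, b))), y.val = 1)
        ∨ ((∃ x ∈ insert (φ a) (insert (φ b) (S s(a, b))), x.val = 0) ∧
            ∀ w ∈ insert (φ a) (insert (φ b) (S s(a, b))), w.val ≠ 0 → m ≤ w.val) := by
    intro a b hab hcab
    rcases hE a b hab with h | h | h
    · exfalso
      have hval : (if (φ a).val < m then 0 else ((φ a).val - m) % (k - 1) + 1)
          = (if (φ b).val < m then 0 else ((φ b).val - m) % (k - 1) + 1) := by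
        simpa [hc] using congrArg Fin.val hcab
      have : φ a = φ b := h (by simp) (by simp) hval
      exact hab.ne (φ.injective this)
    · exact Or.inl h
    · exact Or.inr h
  have key : ∀ a b a' b', F.Adj a b → c a = c b → F.Adj a' b' → c a' = c b' →
      s(a, b) = s(a', b') := by
    intro a b a' b' hab hcab hab' hcab'
    by_contra hne
    have hdisj := h3 s(a, b) ((F.mem_edgeSet).mpr hab)
      s(a', b') ((F.mem_edgeSet).mpr hab') hne
    by_cases H0 : ∃ a₀, (φ a₀).val = 0
    · obtain ⟨a₀, ha₀⟩ := H0
      have hmem0 : ∀ a b, F.Adj a b → ∀ x ∈ insert (φ a) (insert (φ b) (S s(a, b))),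
          x.val = 0 → a = a₀ ∨ b = a₀ := by
        intro a b hab x hx hx0
        have hxa0 : x = φ a₀ := Fin.val_injective (by rw [hx0, ha₀])
        rcases Finset.mem_insert.mp hx with h | hx
        · exact Or.inl (φ.injective (h.symm.trans hxa0))
        rcases Finset.mem_insert.mp hx with h | hx
        · exact Or.inr (φ.injective (h.symm.trans hxa0))
        · exact absurd ⟨a₀, hxa0.symm⟩ (h2 a b hab x hx)
      have hca0 : (c a₀).val = 0 := by
        simp only [hc]; rw [if_pos (by omega)]
      have hval0 : ∀ a, (φ a).val ≠ 0 → (c a).val ≠ 0 → True := fun _ _ _ => trivial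
      have hother : ∀ a b, F.Adj a b → c a = c b →
          (∃ x ∈ insert (φ a) (insert (φ b) (S s(a, b))), x.val = 0) →
          (∀ w ∈ insert (φ a) (insert (φ b) (S s(a, b))), w.val ≠ 0 → m ≤ w.val) →
          False := by
        intro a b hab hcab hx0 hall
        obtain ⟨x, hx, hx0⟩ := hx0
        obtain h | h := hmem0 a b hab x hx hx0
        · have hb0 : (φ b).val ≠ 0 := by
            intro h0
            have hba : b = a₀ := φ.injective (Fin.val_injective (by rw [h0, ha₀]))
            exact hab.ne (h.trans hba.symm)
          have hmb := hall (φ b) (by simp) hb0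
          have hcb : (c b).val ≠ 0 := by
            simp only [hc]; rw [if_neg (by omega)]; omega
          exact hcb (by rw [← hcab, h]; exact hca0)
        · have ha0 : (φ a).val ≠ 0 := by
            intro h0
            have hba : a = a₀ := φ.injective (Fin.val_injective (by rw [h0, ha₀]))
            exact hab.ne (hba.trans h.symm)
          have hma := hall (φ a) (by simp) ha0
          have hca : (c a).val ≠ 0 := by
            simp only [hc]; rw [if_neg (by omega)]; omega
          exact hca (by rw [hcab, h]; exact hca0)
      have hP2 : ∀ a b, F.Adj a b → c a = c b →
          ∃ y ∈ insert (φ a) (insert (φ b) (S s(a, b))), y.val = 1 := by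
        intro a b hab hcab
        rcases hBad a b hab hcab with ⟨_, hy⟩ | ⟨hx0, hall⟩
        · exact hy
        · exact (hother a b hab hcab hx0 hall).elim
      by_cases H1 : ∃ a₁, (φ a₁).val = 1
      · obtain ⟨a₁, ha₁⟩ := H1
        have ha01 : a₀ ≠ a₁ := by
          intro h; rw [h, ha₁] at ha₀; omega
        have heq : ∀ a b, F.Adj a b → c a = c b → s(a, b) = s(a₀, a₁) := by
          intro a b hab hcab
          obtain ⟨y, hy, hy1⟩ := hP2 a b hab hcab
          have hya1 : y = φ a₁ := Fin.val_injective (by rw [hy1, ha₁])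
          have hmem1 : a = a₁ ∨ b = a₁ := by
            rcases Finset.mem_insert.mp hy with h | hy
            · exact Or.inl (φ.injective (h.symm.trans hya1))
            rcases Finset.mem_insert.mp hy with h | hy
            · exact Or.inr (φ.injective (h.symm.trans hya1))
            · exact absurd ⟨a₁, hya1.symm⟩ (h2 a b hab y hy)
          have hx0 : ∃ x ∈ insert (φ a) (insert (φ b) (S s(a, b))), x.val = 0 := by
            rcases hBad a b hab hcab with ⟨h, _⟩ | ⟨h, _⟩ <;> exact h
          obtain ⟨x, hx, hx0⟩ := hx0
          obtain h0 | h0 := hmem0 a b hab x hx hx0 <;> obtain h1 | h1 := hmem1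
          · exact absurd (h0.symm.trans h1) ha01
          · rw [h0, h1]
          · rw [h0, h1, Sym2.eq_swap]
          · exact absurd (h0.symm.trans h1) ha01
        exact hne ((heq a b hab hcab).trans (heq a' b' hab' hcab').symm)
      · have hA1 : ∀ a b, F.Adj a b → c a = c b → ∃ w ∈ S s(a, b), w.val = 1 := by
          intro a b hab hcab
          obtain ⟨y, hy, hy1⟩ := hP2 a b hab hcab
          rcases Finset.mem_insert.mp hy with h | hy
          · exact absurd ⟨a, h ▸ hy1⟩ H1
          rcases Finset.mem_insert.mp hy with h | hy
          · exact absurd ⟨b, h ▸ hy1⟩ H1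
          · exact ⟨y, hy, hy1⟩
        obtain ⟨w, hw, hw1⟩ := hA1 a b hab hcab
        obtain ⟨w', hw', hw1'⟩ := hA1 a' b' hab' hcab'
        have : w = w' := Fin.val_injective (by rw [hw1, hw1'])
        exact Finset.disjoint_left.mp hdisj hw (this ▸ hw')
    · have hA : ∀ a b, F.Adj a b → c a = c b → ∃ w ∈ S s(a, b), w.val = 0 := by
        intro a b hab hcab
        have hx : ∃ x ∈ insert (φ a) (insert (φ b) (S s(a, b))), x.val = 0 := by
          rcases hBad a b hab hcab with ⟨h, _⟩ | ⟨h, _⟩ <;> exact h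
        obtain ⟨x, hx, hx0⟩ := hx
        rcases Finset.mem_insert.mp hx with h | hx
        · exact absurd ⟨a, h ▸ hx0⟩ H0
        rcases Finset.mem_insert.mp hx with h | hx
        · exact absurd ⟨b, h ▸ hx0⟩ H0
        · exact ⟨x, hx, hx0⟩
      obtain ⟨w, hw, hw0⟩ := hA a b hab hcab
      obtain ⟨w', hw', hw0'⟩ := hA a' b' hab' hcab'
      have : w = w' := Fin.val_injective (by rw [hw0, hw0'])
      exact Finset.disjoint_left.mp hdisj hw (this ▸ hw')
  by_cases hχ : F.chromaticNumber ≤ (k : ℕ∞)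
  · exact Or.inl hχ
  · right
    obtain ⟨a, b, hab, hcab⟩ : ∃ a b, F.Adj a b ∧ c a = c b := by
      by_contra h
      push_neg at h
      exact hχ (SimpleGraph.Colorable.chromaticNumber_le
        ⟨SimpleGraph.Coloring.mk c fun {x y} hxy => h x y hxy⟩)
    refine ⟨a, b, hab, lt_of_le_of_lt ?_ (lt_of_not_ge hχ)⟩
    refine SimpleGraph.Colorable.chromaticNumber_le
      ⟨SimpleGraph.Coloring.mk c fun {x y} hxy hcxy => ?_⟩
    rw [SimpleGraph.deleteEdges_adj] at hxy
    exact hxy.2 (by rw [key x y a b hxy.1 hcxy hab hcab]; exact rfl)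
end

section
/- Let F be a graph, let 2 ≤ p < r, set t = (r−2)|E(F)| + |V(F)|, and let G be an n-vertex r-graph. Define G_r = G and, for p ≤ i < r, G_i = Δ*(t)G_{i+1}. Then the number of hyperedges H of G for which there exist some q with p ≤ q < r and some q-element subset of H that is not a hyperedge of G_q is at most C·n^{r−1}, where C depends only on r and t. -/
open Finset
open scoped Classical

private lemma filter_superset_card_le {n r : ℕ} (E : Finset (Finset (Fin n)))
    (hu : ∀ e ∈ E, e.card = r) (B : Finset (Fin n)) :
    (E.filter (fun H => B ⊆ H)).card ≤ n ^ (r - B.card) := by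
  have h1 : (E.filter (fun H => B ⊆ H)).card
      ≤ (Finset.powersetCard (r - B.card) (Finset.univ : Finset (Fin n))).card := by
    apply Finset.card_le_card_of_injOn (fun H => H \ B)
    · intro H hH
      simp only [Finset.mem_coe, Finset.mem_filter] at hH
      simp only [Finset.mem_coe]
      rw [Finset.mem_powersetCard]
      exact ⟨Finset.subset_univ _, by rw [Finset.card_sdiff_of_subset hH.2, hu H hH.1]⟩
    · intro H hH H' hH' hEq
      simp only [Finset.coe_filter, Set.mem_setOf_eq] at hH hH'
      have h2 := congrArg (fun s => s ∪ B) hEq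
      simpa [Finset.sdiff_union_of_subset hH.2, Finset.sdiff_union_of_subset hH'.2] using h2
  calc (E.filter (fun H => B ⊆ H)).card
      ≤ (Finset.powersetCard (r - B.card) (Finset.univ : Finset (Fin n))).card := h1
    _ = n.choose (r - B.card) := by
        rw [Finset.card_powersetCard, Finset.card_univ, Fintype.card_fin]
    _ ≤ n ^ (r - B.card) := Nat.choose_le_pow _ _

private lemma light_lemma {n s t : ℕ} (G' : HyperGraph (Fin n) s) (A : Finset (Fin n))
    (hA : A.card = s - 1) (h : A ∉ (shadowOp t G').edges) :
    (G'.edges.filter (fun e => A ⊆ e)).card < t := by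
  by_contra hc
  exact h (Finset.mem_filter.mpr ⟨Finset.mem_univ _, hA, by omega⟩)

/-- With `t = (r−2)|E(F)| + |V(F)|`, `2 ≤ p < r`, `G_r = G` and
`G_i = Δ*(t)G_{i+1}`: the number of hyperedges `H` of an `n`-vertex `r`-graph `G` having,
for some `p ≤ q < r`, a `q`-subset that is not a hyperedge of `G_q`, is at most
`C·n^{r−1}` for a constant `C` depending only on `r` and `t`. -/
theorem statement_16 {α : Type*} [Fintype α] (F : SimpleGraph α) (r p t : ℕ)
    (hp : 2 ≤ p) (hpr : p < r)
    (ht : t = (r - 2) * Nat.card F.edgeSet + Fintype.card α) :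
    ∃ C : ℕ, ∀ n : ℕ, ∀ G : HyperGraph (Fin n) r,
      (G.edges.filter (fun H => ∃ q, p ≤ q ∧ q < r ∧
        ∃ A ⊆ H, A.card = q ∧ A ∉ (iterShadow t G (r - q)).edges)).card
        ≤ C * n ^ (r - 1) := by
    classical
  refine ⟨r * t, fun n G => ?_⟩
  set Sq : ℕ → Finset (Finset (Fin n)) := fun q => G.edges.filter (fun H =>
      ∃ B, B ⊆ H ∧ B.card = q + 1 ∧ B ∈ (iterShadow t G (r - (q+1))).edges ∧
        ∃ A, A ⊆ B ∧ A.card = q ∧ A ∉ (iterShadow t G (r - q)).edges) with hSq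
  have key : (G.edges.filter (fun H => ∃ q, p ≤ q ∧ q < r ∧
        ∃ A ⊆ H, A.card = q ∧ A ∉ (iterShadow t G (r - q)).edges)) ⊆
      (Finset.Ico p r).biUnion Sq := by
    intro H hH
    simp only [Finset.mem_filter] at hH
    obtain ⟨hHG, q0, hpq0, hq0r, hbad⟩ := hH
    set P : ℕ → Prop := fun q => p ≤ q ∧ ∃ A, A ⊆ H ∧ A.card = q ∧
        A ∉ (iterShadow t G (r - q)).edges with hPdef
    have hq0 : P q0 := ⟨hpq0, hbad⟩
    have hq0le : q0 ≤ r - 1 := by omega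
    have hPq : P (Nat.findGreatest P (r-1)) := Nat.findGreatest_spec hq0le hq0
    set q := Nat.findGreatest P (r-1) with hqdef
    have hqle : q ≤ r - 1 := Nat.findGreatest_le _
    obtain ⟨hpq, A, hAH, hAcard, hAnot⟩ := hPq
    have hHcard : H.card = r := G.uniform H hHG
    have hqr : q < r := by omega
    obtain ⟨B, hAB, hBH, hBcard⟩ := Finset.exists_subsuperset_card_eq hAH (n := 1 + A.card) (by omega) (by omega)
    have hBcard' : B.card = q + 1 := by omega
    have hBmem : B ∈ (iterShadow t G (r - (q+1))).edges := by
      by_cases hc : q + 1 = r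
      · have hBe : B = H := Finset.eq_of_subset_of_card_le hBH (by omega)
        have h0 : r - (q+1) = 0 := by omega
        rw [h0, hBe]
        exact hHG
      · by_contra hn
        have hle : q + 1 ≤ q := Nat.le_findGreatest (by omega) ⟨by omega, B, hBH, hBcard', hn⟩
        omega
    refine Finset.mem_biUnion.mpr ⟨q, Finset.mem_Ico.mpr ⟨hpq, hqr⟩, ?_⟩
    exact Finset.mem_filter.mpr ⟨hHG, B, hBH, hBcard', hBmem, A, hAB, hAcard, hAnot⟩
  have perq : ∀ q ∈ Finset.Ico p r, (Sq q).card ≤ t * n ^ (r - 1) := by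
    intro q hq
    obtain ⟨hpq, hqr⟩ := Finset.mem_Ico.mp hq
    set W := (Finset.univ : Finset (Finset (Fin n))).filter (fun B => B.card = q+1 ∧
        B ∈ (iterShadow t G (r-(q+1))).edges ∧
        ∃ A, A ⊆ B ∧ A.card = q ∧ A ∉ (iterShadow t G (r-q)).edges) with hWdef
    have hsub : Sq q ⊆ W.biUnion (fun B => G.edges.filter (fun H => B ⊆ H)) := by
      intro H hH
      obtain ⟨hHG, B, hBH, hBc, hBm, hA⟩ := Finset.mem_filter.mp hH
      exact Finset.mem_biUnion.mpr ⟨B, Finset.mem_filter.mpr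
        ⟨Finset.mem_univ _, hBc, hBm, hA⟩, Finset.mem_filter.mpr ⟨hHG, hBH⟩⟩
    set L := (Finset.univ : Finset (Finset (Fin n))).filter (fun A => A.card = q ∧
        A ∉ (iterShadow t G (r-q)).edges) with hLdef
    have hWL : W ⊆ L.biUnion (fun A =>
        ((iterShadow t G (r-(q+1))).edges.filter (fun B => A ⊆ B))) := by
      intro B hB
      obtain ⟨-, hBc, hBm, A, hAB, hAc, hAn⟩ := Finset.mem_filter.mp hB
      exact Finset.mem_biUnion.mpr ⟨A, Finset.mem_filter.mpr ⟨Finset.mem_univ _, hAc, hAn⟩,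
        Finset.mem_filter.mpr ⟨hBm, hAB⟩⟩
    have hfib : ∀ A ∈ L, ((iterShadow t G (r-(q+1))).edges.filter (fun B => A ⊆ B)).card ≤ t := by
      intro A hA
      obtain ⟨-, hAc, hAn⟩ := Finset.mem_filter.mp hA
      have hrq : r - q = (r - (q+1)) + 1 := by omega
      rw [hrq] at hAn
      have hAn' : A ∉ (shadowOp t (iterShadow t G (r - (q+1)))).edges := hAn
      have hlt := light_lemma (iterShadow t G (r - (q+1))) A (by omega) hAn'
      omega
    have hL : L.card ≤ n ^ q := by
      have hsubL : L ⊆ Finset.powersetCard q Finset.univ := by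
        intro A hA
        rw [Finset.mem_powersetCard]
        exact ⟨Finset.subset_univ _, (Finset.mem_filter.mp hA).2.1⟩
      calc L.card ≤ (Finset.powersetCard q (Finset.univ : Finset (Fin n))).card :=
            Finset.card_le_card hsubL
        _ = n.choose q := by rw [Finset.card_powersetCard, Finset.card_univ, Fintype.card_fin]
        _ ≤ n ^ q := Nat.choose_le_pow _ _
    have hW : W.card ≤ n ^ q * t := by
      calc W.card ≤ (L.biUnion (fun A =>
              ((iterShadow t G (r-(q+1))).edges.filter (fun B => A ⊆ B)))).card :=
            Finset.card_le_card hWL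
        _ ≤ ∑ A ∈ L, ((iterShadow t G (r-(q+1))).edges.filter (fun B => A ⊆ B)).card :=
            Finset.card_biUnion_le
        _ ≤ ∑ _A ∈ L, t := Finset.sum_le_sum hfib
        _ = L.card * t := by rw [Finset.sum_const, smul_eq_mul]
        _ ≤ n ^ q * t := Nat.mul_le_mul_right t hL
    have hfibH : ∀ B ∈ W, (G.edges.filter (fun H => B ⊆ H)).card ≤ n ^ (r - (q+1)) := by
      intro B hB
      have hBc := (Finset.mem_filter.mp hB).2.1
      have h := filter_superset_card_le G.edges G.uniform B
      rwa [hBc] at h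
    calc (Sq q).card ≤ (W.biUnion (fun B => G.edges.filter (fun H => B ⊆ H))).card :=
          Finset.card_le_card hsub
      _ ≤ ∑ B ∈ W, (G.edges.filter (fun H => B ⊆ H)).card := Finset.card_biUnion_le
      _ ≤ ∑ _B ∈ W, n ^ (r - (q+1)) := Finset.sum_le_sum hfibH
      _ = W.card * n ^ (r - (q+1)) := by rw [Finset.sum_const, smul_eq_mul]
      _ ≤ (n ^ q * t) * n ^ (r - (q+1)) := Nat.mul_le_mul_right _ hW
      _ = t * n ^ (r - 1) := by
          rw [mul_comm (n ^ q) t, mul_assoc, ← pow_add,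
            show q + (r - (q+1)) = r - 1 by omega]
  calc (G.edges.filter (fun H => ∃ q, p ≤ q ∧ q < r ∧
        ∃ A ⊆ H, A.card = q ∧ A ∉ (iterShadow t G (r - q)).edges)).card
      ≤ ((Finset.Ico p r).biUnion Sq).card := Finset.card_le_card key
    _ ≤ ∑ q ∈ Finset.Ico p r, (Sq q).card := Finset.card_biUnion_le
    _ ≤ ∑ _q ∈ Finset.Ico p r, t * n ^ (r - 1) := Finset.sum_le_sum perq
    _ = (r - p) * (t * n ^ (r - 1)) := by rw [Finset.sum_const, smul_eq_mul, Nat.card_Ico]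
    _ ≤ r * t * n ^ (r - 1) := by
        rw [mul_assoc]
        exact Nat.mul_le_mul_right _ (Nat.sub_le r p)
end
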